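/- Let F be a finite field with q elements and let ψ be a nontrivial additive character of F with values in ℂ. Then the sum of ψ(det A) over all 3×3 matrices A with entries in F equals q⁷ + q⁶ − q⁴. -/

import Mathlib

open Finset

/-- For a nontrivial additive character `ψ` of a finite field `F` with `q` elements,
the sum of `ψ(det A)` over all 3×3 matrices `A` over `F` equals `q⁷ + q⁶ − q⁴`. -/
theorem stmt_11 (F : Type*) [Field F] [Fintype F] (q : ℕ) (hq : Fintype.card F = q)
    (ψ : AddChar F ℂ) (hψ : ∃ a : F, ψ a ≠ 1) :
    ∑ A : Matrix (Fin 3) (Fin 3) F, ψ A.det =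
      (q : ℂ) ^ 7 + (q : ℂ) ^ 6 - (q : ℂ) ^ 4 := by
  classical
  have hq2 : 2 ≤ q := hq ▸ Fintype.one_lt_card
  set N : F → ℕ := fun c => (univ.filter fun A : Matrix (Fin 3) (Fin 3) F => A.det = c).card
    with hNdef
  -- fiberwise decomposition
  have h1 : ∑ A : Matrix (Fin 3) (Fin 3) F, ψ A.det = ∑ c : F, (N c : ℂ) * ψ c := by
    rw [← Finset.sum_fiberwise' univ (fun A : Matrix (Fin 3) (Fin 3) F => A.det) (fun c => ψ c)]
    exact Finset.sum_congr rfl fun c _ => by rw [Finset.sum_const, nsmul_eq_mul]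
  -- fibers over nonzero values all have the same size
  have hB : ∀ c : F, c ≠ 0 → N c = N 1 := by
    intro c hc
    refine Finset.card_nbij' (fun A => A.updateRow 0 (c⁻¹ • A 0))
      (fun A => A.updateRow 0 (c • A 0)) ?_ ?_ ?_ ?_
    · intro A hA
      simp only [Finset.mem_coe, mem_filter, mem_univ, true_and] at hA ⊢
      rw [Matrix.det_updateRow_smul, Matrix.updateRow_eq_self, hA, inv_mul_cancel₀ hc]
    · intro A hA
      simp only [Finset.mem_coe, mem_filter, mem_univ, true_and] at hA ⊢
      rw [Matrix.det_updateRow_smul, Matrix.updateRow_eq_self, hA, mul_one]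
    · intro A _
      ext i j
      by_cases hi : i = 0 <;>
        simp [Matrix.updateRow_apply, hi, smul_smul, mul_inv_cancel₀ hc]
    · intro A _
      ext i j
      by_cases hi : i = 0 <;>
        simp [Matrix.updateRow_apply, hi, smul_smul, inv_mul_cancel₀ hc]
  -- the character is nonzero (nontrivial)
  have hψ0 : ψ ≠ 0 := by
    obtain ⟨a, ha⟩ := hψ
    intro h
    exact ha (by rw [h]; rfl)
  have hsum0 : ∑ c : F, ψ c = 0 := AddChar.sum_eq_zero_iff_ne_zero.mpr hψ0
  -- total count
  have htot : ∑ c : F, N c = q ^ 9 := by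
    rw [hNdef, ← Finset.card_eq_sum_card_fiberwise
      (fun (A : Matrix (Fin 3) (Fin 3) F) (_ : A ∈ univ) => mem_univ A.det), card_univ,
      Fintype.card_congr (Matrix.of (m := Fin 3) (n := Fin 3) (α := F)).symm]
    simp [Fintype.card_fun, hq]
    ring
  -- count of invertible matrices
  have hGL : ∑ c ∈ univ.erase (0 : F), N c
      = (q ^ 3 - 1) * (q ^ 3 - q) * (q ^ 3 - q ^ 2) := by
    have e : {A : Matrix (Fin 3) (Fin 3) F // A.det ≠ 0} ≃ (Matrix (Fin 3) (Fin 3) F)ˣ := by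
      refine Equiv.ofBijective (fun A => ((Matrix.isUnit_iff_isUnit_det _).mpr
        (isUnit_iff_ne_zero.mpr A.2)).unit) ⟨?_, ?_⟩
      · intro A B h
        apply Subtype.ext
        have h2 := congrArg Units.val h
        simpa using h2
      · intro u
        refine ⟨⟨(u : Matrix (Fin 3) (Fin 3) F),
          ((Matrix.isUnit_iff_isUnit_det _).mp u.isUnit).ne_zero⟩, Units.ext (by simp)⟩
    have hcard : (univ.filter fun A : Matrix (Fin 3) (Fin 3) F => A.det ≠ 0).card
        = ∏ i : Fin 3, (q ^ 3 - q ^ (i : ℕ)) := by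
      rw [← Fintype.card_subtype, Fintype.card_congr e, ← Nat.card_eq_fintype_card]
      have h := Matrix.card_GL_field (𝔽 := F) 3
      simpa [hq] using h
    have hmaps : ∀ A ∈ (univ.filter fun A : Matrix (Fin 3) (Fin 3) F => A.det ≠ 0),
        A.det ∈ univ.erase (0 : F) := by
      intro A hA
      simp only [mem_filter, mem_univ, true_and] at hA
      exact mem_erase.mpr ⟨hA, mem_univ _⟩
    rw [Finset.card_eq_sum_card_fiberwise hmaps] at hcard
    have hfib : ∀ c ∈ univ.erase (0 : F),
        ((univ.filter fun A : Matrix (Fin 3) (Fin 3) F => A.det ≠ 0).filter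
          fun A => A.det = c).card = N c := by
      intro c hc
      have hc0 : c ≠ 0 := (mem_erase.mp hc).1
      rw [hNdef]
      congr 1
      ext A
      simp only [mem_filter, mem_univ, true_and]
      constructor
      · exact fun h => h.2
      · exact fun h => ⟨h ▸ hc0, h⟩
    calc ∑ c ∈ univ.erase (0 : F), N c
        = ∑ c ∈ univ.erase (0 : F),
            ((univ.filter fun A : Matrix (Fin 3) (Fin 3) F => A.det ≠ 0).filter
              fun A => A.det = c).card := (Finset.sum_congr rfl hfib).symm
      _ = ∏ i : Fin 3, (q ^ 3 - q ^ (i : ℕ)) := hcard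
      _ = (q ^ 3 - 1) * (q ^ 3 - q) * (q ^ 3 - q ^ 2) := by
          simp [Fin.prod_univ_three]
  -- erase-sum of N is (q-1) * N 1
  have hcer : (univ.erase (0 : F)).card = q - 1 := by
    rw [Finset.card_erase_of_mem (mem_univ _), card_univ, hq]
  have herase : ∑ c ∈ univ.erase (0 : F), N c = (q - 1) * N 1 := by
    rw [Finset.sum_congr rfl fun c hc => hB c (mem_erase.mp hc).1, Finset.sum_const, hcer,
      smul_eq_mul]
  -- split the character sum
  have hsplit : ∑ c : F, (N c : ℂ) * ψ c = (N 0 : ℂ) - (N 1 : ℂ) := by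
    rw [← Finset.sum_erase_add _ _ (mem_univ (0 : F))]
    have hx : ∑ c ∈ univ.erase (0 : F), (N c : ℂ) * ψ c
        = (N 1 : ℂ) * ∑ c ∈ univ.erase (0 : F), ψ c := by
      rw [Finset.mul_sum]
      exact Finset.sum_congr rfl fun c hc => by rw [hB c (mem_erase.mp hc).1]
    have hy : ∑ c ∈ univ.erase (0 : F), ψ c = -1 := by
      have h : ∑ c ∈ univ.erase (0 : F), ψ c + ψ 0 = ∑ c : F, ψ c :=
        Finset.sum_erase_add _ _ (mem_univ (0 : F))
      rw [hsum0, AddChar.map_zero_eq_one] at h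
      linear_combination h
    rw [hx, hy, AddChar.map_zero_eq_one]
    ring
  -- cast the counting identities to ℂ
  have h31 : 1 ≤ q ^ 3 := Nat.one_le_pow _ _ (by omega)
  have h3q : q ≤ q ^ 3 := Nat.le_self_pow (by omega) q
  have h3q2 : q ^ 2 ≤ q ^ 3 := Nat.pow_le_pow_right (by omega) (by omega)
  have hG' : ((q : ℂ) - 1) * (N 1 : ℂ)
      = ((q : ℂ) ^ 3 - 1) * ((q : ℂ) ^ 3 - (q : ℂ)) * ((q : ℂ) ^ 3 - (q : ℂ) ^ 2) := by
    have h := herase.symm.trans hGL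
    have := congrArg (fun n : ℕ => (n : ℂ)) h
    push_cast [Nat.cast_sub h31, Nat.cast_sub h3q, Nat.cast_sub h3q2,
      Nat.cast_sub (by omega : 1 ≤ q)] at this
    linear_combination this
  have hN0' : (N 0 : ℂ) = (q : ℂ) ^ 9
      - ((q : ℂ) ^ 3 - 1) * ((q : ℂ) ^ 3 - (q : ℂ)) * ((q : ℂ) ^ 3 - (q : ℂ) ^ 2) := by
    have h := Finset.sum_erase_add univ N (mem_univ (0 : F))
    rw [htot, hGL] at h
    have := congrArg (fun n : ℕ => (n : ℂ)) h.symm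
    push_cast [Nat.cast_sub h31, Nat.cast_sub h3q, Nat.cast_sub h3q2] at this
    linear_combination -this
  have hq1 : (q : ℂ) - 1 ≠ 0 := by
    have : (q : ℂ) ≠ 1 := by
      intro h
      have : q = 1 := by exact_mod_cast h
      omega
    exact sub_ne_zero.mpr this
  have key : ((q : ℂ) - 1) * ((N 0 : ℂ) - (N 1 : ℂ))
      = ((q : ℂ) - 1) * ((q : ℂ) ^ 7 + (q : ℂ) ^ 6 - (q : ℂ) ^ 4) := by
    linear_combination ((q : ℂ) - 1) * hN0' - hG'
  rw [h1, hsplit]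
  exact mul_left_cancel₀ hq1 key
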